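/- Define φ₅(x) = 4i·x(x−1)(4x − 2 − 11i)⁴ / (8x − 4 + 3i)⁵ over ℂ. Then there exists a polynomial R(x) ∈ ℂ[x] of degree 3 and a nonzero constant c such that φ₅(x) − 1 = c·R(x)²/(8x − 4 + 3i)⁵ as rational functions. -/
import Mathlib


open Polynomial Complex

/-- For the degree-6 covering φ₅ = 4i·x(x-1)(4x-2-11i)⁴/(8x-4+3i)⁵, the numerator
    of φ₅(x) - 1 is a nonzero constant times the square of a cubic polynomial. -/
theorem stmt_12 (Num Den : Polynomial ℂ)
    (hNum : Num = C (4 * I) * X * (X - 1) * (C 4 * X - C (2 + 11 * I)) ^ 4)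
    (hDen : Den = (C 8 * X - C (4 - 3 * I)) ^ 5) :
    ∃ (R : Polynomial ℂ) (c : ℂ) , c ≠ 0 ∧ R.natDegree = 3 ∧
      Num - Den = C c * R ^ 2 := by
  set CI : Polynomial ℂ := C I with hCI
  refine ⟨C 32 * X ^ 3 + C (-48 + 336 * I) * X ^ 2 + C (98 - 336 * I) * X
      + C (-41 - 38 * I), I, Complex.I_ne_zero, ?_, ?_⟩
  · compute_degree!
  · have hI : CI ^ 2 = -1 := by
      rw [hCI, ← C_pow, Complex.I_sq, map_neg, map_one]
    subst hNum hDen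
    have e1 : C ((4 : ℂ) * I) = 4 * CI := by
      rw [hCI, map_mul]; simp [map_ofNat]
    have e2 : C ((2 : ℂ) + 11 * I) = 2 + 11 * CI := by
      rw [hCI, map_add, map_mul]; simp [map_ofNat]
    have e3 : C ((4 : ℂ) - 3 * I) = 4 - 3 * CI := by
      rw [hCI, map_sub, map_mul]; simp [map_ofNat]
    have e4 : C ((-48 : ℂ) + 336 * I) = -48 + 336 * CI := by
      rw [hCI, map_add, map_mul]; simp [map_ofNat]
    have e5 : C ((98 : ℂ) - 336 * I) = 98 - 336 * CI := by
      rw [hCI, map_sub, map_mul]; simp [map_ofNat]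
    have e6 : C ((-41 : ℂ) - 38 * I) = -41 - 38 * CI := by
      rw [hCI, map_sub, map_mul]; simp [map_ofNat]
    have e7 : C (4 : ℂ) = 4 := map_ofNat C 4
    have e8 : C (8 : ℂ) = 8 := map_ofNat C 8
    have e9 : C (32 : ℂ) = 32 := map_ofNat C 32
    rw [e1, e2, e3, e4, e5, e6, e7, e8, e9, ← hCI]
    linear_combination ((1024 : Polynomial ℂ) + (-5521)*CI + (1620)*CI^2
      + (-243)*CI^3 + (-10240)*X + (38692)*X*CI + (-45832)*X*CI^2
      + (-58564)*X*CI^3 + (40960)*X^2 + (-105124)*X^2*CI + (127776)*X^2*CI^2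
      + (58564)*X^2*CI^3 + (-81920)*X^3 + (132864)*X^3*CI + (-85184)*X^3*CI^2
      + (81920)*X^4 + (-66432)*X^4*CI + (-32768)*X^5) * hI
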